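/- Let g₀ be the log-logistic density with parameter γ > 1, g₀(t) = γ t^{γ−1}/(1+t^γ)², with mean μ. Then the Fisher information for scale of the length-biased density f₁(x) = x g₀(x)/μ equals (γ²−1)/3. -/

import Mathlib

open MeasureTheory Set Real Filter Topology

/-- Continuity of `x ↦ x ^ γ` on `Ioi 0`. -/
lemma contOn_rpow_aux (γ : ℝ) : ContinuousOn (fun x : ℝ => x ^ γ) (Ioi (0:ℝ)) :=
  fun x hx => (Real.continuousAt_rpow_const x γ (Or.inl (ne_of_gt hx))).continuousWithinAt

/-- Integrability of `γ x^γ/(1+x^γ)²` on `(0,∞)` for `γ > 1`. -/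
lemma integrable_rho (γ : ℝ) (hγ : 1 < γ) :
    IntegrableOn (fun x : ℝ => γ * x ^ γ / (1 + x ^ γ) ^ 2) (Ioi (0:ℝ)) := by
  have hγ0 : (0:ℝ) < γ := lt_trans one_pos hγ
  have hcont : ContinuousOn (fun x : ℝ => γ * x ^ γ / (1 + x ^ γ) ^ 2) (Ioi (0:ℝ)) := by
    apply ContinuousOn.div
    · exact (contOn_rpow_aux γ).const_smul γ
    · exact ((continuousOn_const.add (contOn_rpow_aux γ)).pow 2)
    · intro x hx
      have : (0:ℝ) < x ^ γ := rpow_pos_of_pos hx γ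
      positivity
  rw [← Ioc_union_Ioi_eq_Ioi (zero_le_one : (0:ℝ) ≤ 1)]
  apply IntegrableOn.union
  · -- on (0,1]: bounded by γ
    refine Integrable.mono' (integrable_const γ) ?_ ?_
    · exact (hcont.mono Ioc_subset_Ioi_self).aestronglyMeasurable measurableSet_Ioc
    · rw [ae_restrict_iff' measurableSet_Ioc]
      filter_upwards with x hx
      have hx0 : (0:ℝ) < x := hx.1
      have hu : (0:ℝ) < x ^ γ := rpow_pos_of_pos hx0 γ
      have h1 : γ * x ^ γ / (1 + x ^ γ) ^ 2 ≤ γ := by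
        rw [div_le_iff₀ (by positivity)]
        nlinarith [mul_pos hγ0 hu, mul_pos hγ0 (mul_pos hu hu)]
      have h0 : 0 ≤ γ * x ^ γ / (1 + x ^ γ) ^ 2 := by positivity
      rw [Real.norm_eq_abs, abs_of_nonneg h0]
      exact h1
  · -- on (1,∞): bounded by γ x^(-γ)
    refine Integrable.mono' ((integrableOn_Ioi_rpow_of_lt (by linarith : -γ < -1)
      one_pos).const_mul γ) ?_ ?_
    · exact (hcont.mono (fun x (hx : (1:ℝ) < x) => lt_trans one_pos hx)).aestronglyMeasurable measurableSet_Ioi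
    · rw [ae_restrict_iff' measurableSet_Ioi]
      filter_upwards with x hx
      have hx0 : (0:ℝ) < x := lt_trans one_pos hx
      have hu : (0:ℝ) < x ^ γ := rpow_pos_of_pos hx0 γ
      have h0 : 0 ≤ γ * x ^ γ / (1 + x ^ γ) ^ 2 := by positivity
      rw [Real.norm_eq_abs, abs_of_nonneg h0]
      have hneg : x ^ (-γ) = (x ^ γ)⁻¹ := by
        rw [rpow_neg (le_of_lt hx0)]
      rw [hneg]
      rw [div_le_iff₀ (by positivity)]
      have h2 : γ * (x ^ γ)⁻¹ * (1 + x ^ γ) ^ 2 = γ * (1 + x ^ γ) ^ 2 / (x ^ γ) := by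
        field_simp
      rw [h2, le_div_iff₀ hu]
      nlinarith [mul_pos hγ0 hu, sq_nonneg (x ^ γ)]

/-- The difference between the Fisher integrand and `(γ²-1)/3 · f₁`. -/
noncomputable def Dfun (γ μ : ℝ) (x : ℝ) : ℝ :=
  γ * x ^ γ * (((1 + γ) - (γ - 1) * x ^ γ) ^ 2 - (γ ^ 2 - 1) / 3 * (1 + x ^ γ) ^ 2) /
    (μ * (1 + x ^ γ) ^ 4)

/-- Explicit antiderivative of `Dfun`. -/
noncomputable def Gfun (γ μ : ℝ) (x : ℝ) : ℝ :=
  x * x ^ γ * (2 * γ * (γ + 2) / 3 + (-(2 * γ * (γ - 2) / 3)) * x ^ γ) /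
    (μ * (1 + x ^ γ) ^ 3)

lemma Gfun_hasDeriv (γ μ x : ℝ) (hγ : 1 < γ) (hμ : μ ≠ 0) (hx : 0 < x) :
    HasDerivAt (Gfun γ μ) (Dfun γ μ x) x := by
  have hu : (0:ℝ) < x ^ γ := rpow_pos_of_pos hx γ
  have hT : (0:ℝ) < 1 + x ^ γ := by linarith
  have h1 : HasDerivAt (fun y : ℝ => y ^ γ) (γ * x ^ (γ - 1)) x :=
    Real.hasDerivAt_rpow_const (Or.inl hx.ne')
  have hA : HasDerivAt
      (fun y : ℝ => y * y ^ γ * (2 * γ * (γ + 2) / 3 + (-(2 * γ * (γ - 2) / 3)) * y ^ γ))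
      ((1 * x ^ γ + x * (γ * x ^ (γ - 1))) *
          (2 * γ * (γ + 2) / 3 + (-(2 * γ * (γ - 2) / 3)) * x ^ γ) +
        x * x ^ γ * ((-(2 * γ * (γ - 2) / 3)) * (γ * x ^ (γ - 1)))) x :=
    ((hasDerivAt_id x).mul h1).mul ((h1.const_mul (-(2 * γ * (γ - 2) / 3))).const_add _)
  have hB : HasDerivAt (fun y : ℝ => μ * (1 + y ^ γ) ^ 3)
      (μ * ((3 : ℕ) * (1 + x ^ γ) ^ (3 - 1) * (γ * x ^ (γ - 1)))) x :=
    ((h1.const_add 1).pow 3).const_mul μ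
  have hBne : μ * (1 + x ^ γ) ^ 3 ≠ 0 := by positivity
  have H := hA.div hB hBne
  have hxv : x ^ (γ - 1) = x ^ γ / x := by
    rw [rpow_sub hx, rpow_one]
  convert H using 1
  · rfl
  · rfl
  · rfl
  rw [hxv]
  show Dfun γ μ x = _
  rw [Dfun]
  field_simp
  ring

lemma Gfun_tendsto (γ μ : ℝ) (hγ : 1 < γ) (hμ : μ ≠ 0) :
    Tendsto (Gfun γ μ) atTop (𝓝 0) := by
  have hγ0 : (0:ℝ) < γ := lt_trans one_pos hγ
  have t1 : Tendsto (fun x : ℝ => x ^ (1 - 2 * γ)) atTop (𝓝 0) := by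
    rw [show 1 - 2 * γ = -(2 * γ - 1) by ring]
    exact tendsto_rpow_neg_atTop (by linarith)
  have t2 : Tendsto (fun x : ℝ => x ^ (1 - γ)) atTop (𝓝 0) := by
    rw [show 1 - γ = -(γ - 1) by ring]
    exact tendsto_rpow_neg_atTop (by linarith)
  have t3 : Tendsto (fun x : ℝ => x ^ (-γ)) atTop (𝓝 0) := tendsto_rpow_neg_atTop hγ0
  have hnum : Tendsto (fun x : ℝ => 2 * γ * (γ + 2) / 3 * x ^ (1 - 2 * γ) +
      (-(2 * γ * (γ - 2) / 3)) * x ^ (1 - γ)) atTop (𝓝 (2 * γ * (γ + 2) / 3 * 0 +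
      (-(2 * γ * (γ - 2) / 3)) * 0)) :=
    (t1.const_mul _).add (t2.const_mul _)
  have hden : Tendsto (fun x : ℝ => μ * (x ^ (-γ) + 1) ^ 3) atTop (𝓝 (μ * (0 + 1) ^ 3)) :=
    ((t3.add_const 1).pow 3).const_mul μ
  have hdne : μ * ((0:ℝ) + 1) ^ 3 ≠ 0 := by simpa using hμ
  have h := hnum.div hden hdne
  have h0 : (2 * γ * (γ + 2) / 3 * 0 + (-(2 * γ * (γ - 2) / 3)) * 0) / (μ * ((0:ℝ) + 1) ^ 3)
      = 0 := by simp
  rw [h0] at h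
  apply h.congr'
  filter_upwards [eventually_gt_atTop (0:ℝ)] with x hx
  have hu : (0:ℝ) < x ^ γ := rpow_pos_of_pos hx γ
  have e1 : x ^ (1 - 2 * γ) = x / (x ^ γ * x ^ γ) := by
    rw [show 1 - 2 * γ = 1 - γ - γ by ring, rpow_sub hx, rpow_sub hx, rpow_one, div_div]
  have e2 : x ^ (1 - γ) = x / x ^ γ := by rw [rpow_sub hx, rpow_one]
  have e3 : x ^ (-γ) = 1 / x ^ γ := by rw [rpow_neg hx.le, inv_eq_one_div]
  simp only [Pi.div_apply]
  rw [Gfun, e1, e2, e3]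
  have hT : (0:ℝ) < 1 + x ^ γ := by linarith
  field_simp

lemma Dfun_integrable (γ μ : ℝ) (hγ : 1 < γ) (hμ : 0 < μ) :
    IntegrableOn (Dfun γ μ) (Ioi (0:ℝ)) := by
  have hγ0 : (0:ℝ) < γ := lt_trans one_pos hγ
  set K : ℝ := (1 + γ) ^ 2 + (γ ^ 2 - 1) / 3 with hK
  have hKpos : 0 < K := by rw [hK]; nlinarith
  refine Integrable.mono' (((integrable_rho γ hγ).const_mul (K / μ))) ?_ ?_
  · -- measurability
    refine (ContinuousOn.aestronglyMeasurable ?_ measurableSet_Ioi)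
    apply ContinuousOn.div
    · exact (((contOn_rpow_aux γ).const_smul γ).mul
        (((continuousOn_const.sub ((contOn_rpow_aux γ).const_smul (γ-1))).pow 2).sub
          (((continuousOn_const.add (contOn_rpow_aux γ)).pow 2).const_smul ((γ^2-1)/3))))
    · exact ((continuousOn_const.add (contOn_rpow_aux γ)).pow 4).const_smul μ
    · intro x hx
      have : (0:ℝ) < x ^ γ := rpow_pos_of_pos hx γ
      positivity
  · rw [ae_restrict_iff' measurableSet_Ioi]
    filter_upwards with x hx
    have hx0 : (0:ℝ) < x := hx
    have hu : (0:ℝ) < x ^ γ := rpow_pos_of_pos hx0 γ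
    have hT : (0:ℝ) < 1 + x ^ γ := by linarith
    set u := x ^ γ
    have hS : |(1 + γ) - (γ - 1) * u| ≤ (1 + γ) * (1 + u) := by
      rw [abs_le]; constructor <;> nlinarith
    have hM : |((1 + γ) - (γ - 1) * u) ^ 2 - (γ ^ 2 - 1) / 3 * (1 + u) ^ 2|
        ≤ K * (1 + u) ^ 2 := by
      calc |((1 + γ) - (γ - 1) * u) ^ 2 - (γ ^ 2 - 1) / 3 * (1 + u) ^ 2|
          ≤ |((1 + γ) - (γ - 1) * u) ^ 2| + |(γ ^ 2 - 1) / 3 * (1 + u) ^ 2| := abs_sub _ _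
        _ ≤ (1 + γ) ^ 2 * (1 + u) ^ 2 + (γ ^ 2 - 1) / 3 * (1 + u) ^ 2 := by
            apply add_le_add
            · rw [abs_pow]
              calc |(1 + γ) - (γ - 1) * u| ^ 2 ≤ ((1 + γ) * (1 + u)) ^ 2 :=
                    pow_le_pow_left₀ (abs_nonneg _) hS 2
                _ = (1 + γ) ^ 2 * (1 + u) ^ 2 := by ring
            · rw [abs_of_nonneg (mul_nonneg (by nlinarith : (0:ℝ) ≤ (γ ^ 2 - 1) / 3) (by positivity))]
        _ = K * (1 + u) ^ 2 := by rw [hK]; ring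
    have habs : |Dfun γ μ x| = γ * u * |((1 + γ) - (γ - 1) * u) ^ 2
        - (γ ^ 2 - 1) / 3 * (1 + u) ^ 2| / (μ * (1 + u) ^ 4) := by
      rw [Dfun, abs_div, abs_mul, abs_of_pos (mul_pos hγ0 hu),
        abs_of_pos (show (0:ℝ) < μ * (1 + u) ^ 4 by positivity)]
    rw [Real.norm_eq_abs, habs]
    calc γ * u * |((1 + γ) - (γ - 1) * u) ^ 2 - (γ ^ 2 - 1) / 3 * (1 + u) ^ 2|
          / (μ * (1 + u) ^ 4)
        ≤ γ * u * (K * (1 + u) ^ 2) / (μ * (1 + u) ^ 4) := by gcongr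
      _ = K / μ * (γ * u / (1 + u) ^ 2) := by field_simp

lemma integral_Dfun (γ μ : ℝ) (hγ : 1 < γ) (hμ : 0 < μ) :
    ∫ x in Ioi (0:ℝ), Dfun γ μ x = 0 := by
  have hγ0 : (0:ℝ) < γ := lt_trans one_pos hγ
  have hc1 : ContinuousAt (fun x : ℝ => x ^ γ) 0 := continuousAt_rpow_const 0 γ (Or.inr hγ0.le)
  have hcont : ContinuousWithinAt (Gfun γ μ) (Ici 0) 0 := by
    apply ContinuousAt.continuousWithinAt
    apply ContinuousAt.div
    · exact (continuousAt_id.mul hc1).mul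
        (continuousAt_const.add (continuousAt_const.mul hc1))
    · exact continuousAt_const.mul ((continuousAt_const.add hc1).pow 3)
    · rw [zero_rpow hγ0.ne']
      simpa using hμ.ne'
  have h := integral_Ioi_of_hasDerivAt_of_tendsto hcont
    (fun x hx => Gfun_hasDeriv γ μ x hγ hμ.ne' hx)
    (Dfun_integrable γ μ hγ hμ) (Gfun_tendsto γ μ hγ hμ.ne')
  rw [h]
  simp [Gfun]

/-- For the log-logistic density `g₀(t) = γ t^(γ−1)/(1+t^γ)²` with `γ > 1` and mean `μ`,
the Fisher information for scale of the length-biased density `f₁(x) = x g₀(x)/μ`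
equals `(γ²−1)/3`. -/
theorem stmt13 (γ : ℝ) (hγ : 1 < γ)
    (g₀ : ℝ → ℝ) (hg₀ : ∀ t > (0:ℝ), g₀ t = γ * t ^ (γ - 1) / (1 + t ^ γ) ^ 2)
    (μ : ℝ) (hμ : μ = ∫ t in Ioi (0:ℝ), t * g₀ t)
    (f₁ f₁' : ℝ → ℝ) (hf₁ : ∀ x, f₁ x = x * g₀ x / μ)
    (hderiv : ∀ x ∈ Ioi (0:ℝ), HasDerivAt f₁ (f₁' x) x) :
    ∫ x in Ioi (0:ℝ), (1 + x * f₁' x / f₁ x) ^ 2 * f₁ x = (γ ^ 2 - 1) / 3 := by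
  have hγ0 : (0:ℝ) < γ := lt_trans one_pos hγ
  have hρ := integrable_rho γ hγ
  have hEq : EqOn (fun x : ℝ => γ * x ^ γ / (1 + x ^ γ) ^ 2) (fun x => x * g₀ x) (Ioi 0) := by
    intro x hx
    have hx0 : (0:ℝ) < x := hx
    have hu : (0:ℝ) < x ^ γ := rpow_pos_of_pos hx0 γ
    have hT : (0:ℝ) < 1 + x ^ γ := by linarith
    simp only
    rw [hg₀ x hx0, show x ^ (γ - 1) = x ^ γ / x from by rw [rpow_sub hx0, rpow_one]]
    field_simp
  have hμint : IntegrableOn (fun x : ℝ => x * g₀ x) (Ioi 0) :=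
    hρ.congr_fun hEq measurableSet_Ioi
  have hμpos : 0 < μ := by
    rw [hμ, setIntegral_pos_iff_support_of_nonneg_ae ?_ hμint]
    · refine lt_of_lt_of_le ?_ (measure_mono (fun x hx => ⟨?_, hx⟩))
      · simp [Real.volume_Ioi]
      · have hx0 : (0:ℝ) < x := hx
        have hu : (0:ℝ) < x ^ γ := rpow_pos_of_pos hx0 γ
        have : x * g₀ x = γ * x ^ γ / (1 + x ^ γ) ^ 2 := (hEq hx).symm
        simp only [Function.mem_support, this]
        positivity
    · filter_upwards [ae_restrict_mem measurableSet_Ioi] with x hx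
      have hx0 : (0:ℝ) < x := hx
      have hu : (0:ℝ) < x ^ γ := rpow_pos_of_pos hx0 γ
      have h2 : x * g₀ x = γ * x ^ γ / (1 + x ^ γ) ^ 2 := (hEq hx).symm
      show (0:ℝ) ≤ x * g₀ x
      rw [h2]
      positivity
  have hμne : μ ≠ 0 := hμpos.ne'
  have hf₁Eq : EqOn (fun x : ℝ => γ * x ^ γ / (1 + x ^ γ) ^ 2 / μ) f₁ (Ioi 0) := by
    intro x hx
    exact congrArg (· / μ) (hEq hx) |>.trans (hf₁ x).symm
  have hf₁int : IntegrableOn f₁ (Ioi 0) :=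
    IntegrableOn.congr_fun (hρ.div_const μ) hf₁Eq measurableSet_Ioi
  have hint_f₁ : ∫ x in Ioi (0:ℝ), f₁ x = 1 := by
    have h1 : ∫ x in Ioi (0:ℝ), f₁ x = ∫ x in Ioi (0:ℝ), x * g₀ x / μ :=
      setIntegral_congr_fun measurableSet_Ioi (fun x _ => hf₁ x)
    rw [h1, integral_div, ← hμ, div_self hμne]
  have hpt : EqOn (fun x => (1 + x * f₁' x / f₁ x) ^ 2 * f₁ x)
      (fun x => Dfun γ μ x + (γ ^ 2 - 1) / 3 * f₁ x) (Ioi 0) := by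
    intro x hx
    have hx0 : (0:ℝ) < x := hx
    have hu : (0:ℝ) < x ^ γ := rpow_pos_of_pos hx0 γ
    have hT : (0:ℝ) < 1 + x ^ γ := by linarith
    have hTne : (1:ℝ) + x ^ γ ≠ 0 := hT.ne'
    have h1 : HasDerivAt (fun y : ℝ => y ^ γ) (γ * x ^ (γ - 1)) x :=
      Real.hasDerivAt_rpow_const (Or.inl hx0.ne')
    have hφ := (h1.const_mul γ).div (((h1.const_add 1).pow 2).const_mul μ)
      (mul_ne_zero hμne (by simp only [Pi.pow_apply]; positivity))
    have heq : f₁ =ᶠ[𝓝 x] fun y => γ * y ^ γ / (μ * (1 + y ^ γ) ^ 2) := by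
      filter_upwards [isOpen_Ioi.mem_nhds hx] with y hy
      have hy0 : (0:ℝ) < y := hy
      have hyu : (0:ℝ) < y ^ γ := rpow_pos_of_pos hy0 γ
      have hyT : (0:ℝ) < 1 + y ^ γ := by linarith
      rw [hf₁ y, hg₀ y hy0, show y ^ (γ - 1) = y ^ γ / y from by rw [rpow_sub hy0, rpow_one]]
      field_simp
    have hd := hφ.congr_of_eventuallyEq heq
    have hval := (hderiv x hx).unique hd
    have hfx : f₁ x = γ * x ^ γ / (μ * (1 + x ^ γ) ^ 2) := heq.eq_of_nhds
    simp only
    rw [hval, hfx, Dfun, show x ^ (γ - 1) = x ^ γ / x from by rw [rpow_sub hx0, rpow_one]]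
    push_cast
    simp only [Pi.pow_apply]
    field_simp
    ring
  rw [setIntegral_congr_fun measurableSet_Ioi hpt,
    integral_add (Dfun_integrable γ μ hγ hμpos) (hf₁int.const_mul _),
    integral_Dfun γ μ hγ hμpos, integral_const_mul, hint_f₁]
  ring
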